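/- The functions φ₁, …, φₙ produced by the recursion φ_j(t) = φ_{j−1}(t) + (1 − 1/r)α_j ∫₀ᵗ e^{α_j(t−τ)}φ_{j−1}(τ)dτ with φ₀ = f (f continuously differentiable, f(0)=0) solve the lower bidiagonal ODE system A φ' = B φ + F(t) with zero initial conditions, where A is the n×n matrix with 1 on the diagonal and −1 on the subdiagonal, B has α_{j} on the diagonal and −α_{j}/r on the subdiagonal (entry (j, j−1)), and F has only first component F₁(t) = f'(t) − (α₁/r) f(t). -/

import Mathlib

open Complex

lemma aux_int_exp_hasDerivAt (a : ℂ) (h : ℝ → ℂ) (hc : Continuous h) (t : ℝ) :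
    HasDerivAt (fun s : ℝ => ∫ τ in (0:ℝ)..s, Complex.exp (a * (s - τ)) * h τ)
      (a * (∫ τ in (0:ℝ)..t, Complex.exp (a * (t - τ)) * h τ) + h t) t := by
  have key : ∀ s : ℝ, (∫ τ in (0:ℝ)..s, Complex.exp (a * (s - τ)) * h τ)
      = Complex.exp (a * s) * ∫ τ in (0:ℝ)..s, Complex.exp (-(a * τ)) * h τ := by
    intro s
    rw [← intervalIntegral.integral_const_mul]
    congr 1; funext τ
    rw [← mul_assoc, ← Complex.exp_add]; ring_nf
  have hH : HasDerivAt (fun s : ℝ => ∫ τ in (0:ℝ)..s, Complex.exp (-(a * τ)) * h τ)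
      (Complex.exp (-(a*t)) * h t) t :=
    intervalIntegral.integral_hasDerivAt_right
      ((Continuous.mul (by continuity) hc).intervalIntegrable _ _)
      (Continuous.stronglyMeasurableAtFilter (by continuity) _ _)
      (Continuous.continuousAt (by continuity))
  have hE : HasDerivAt (fun s : ℝ => Complex.exp (a * s)) (Complex.exp (a*t) * a) t :=
    (((hasDerivAt_id ((t:ℂ))).const_mul a).cexp.comp_ofReal).congr_deriv (by simp)
  have hmul : HasDerivAt (fun s : ℝ => Complex.exp (a * s) * ∫ τ in (0:ℝ)..s, Complex.exp (-(a * τ)) * h τ) _ t := hE.mul hH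
  have heq : (fun s : ℝ => Complex.exp (a * s) * ∫ τ in (0:ℝ)..s, Complex.exp (-(a * τ)) * h τ)
      = (fun s : ℝ => ∫ τ in (0:ℝ)..s, Complex.exp (a * (s - τ)) * h τ) := by
    funext s; rw [key]
  rw [heq] at hmul
  convert hmul using 1
  rw [key]
  have h2 : Complex.exp (a*t) * (Complex.exp (-(a*t)) * h t) = h t := by
    rw [← mul_assoc, ← Complex.exp_add]; simp
  rw [mul_assoc, h2]; ring

/-- The functions φ₁,…,φₙ from the recursion (3.2.3) solve the lower
bidiagonal ODE system A φ' = B φ + F with zero initial conditions, where A has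
1 on the diagonal, −1 on the subdiagonal, B has αⱼ on the diagonal and −αⱼ/r
on the subdiagonal, F₁(t) = f'(t) − (α₁/r)f(t) and all other components of F
vanish.  (Here α j, φ (j+1) denote α_{j+1}, φ_{j+1} for j : Fin n.) -/
theorem recursion_solves_ODE_system (n : ℕ) (α : Fin n → ℂ) (r : ℝ) (hr : 1 < r)
    (f : ℝ → ℂ) (hf : ContDiff ℝ 1 f) (hf0 : f 0 = 0)
    (φ : ℕ → ℝ → ℂ) (hφ0 : φ 0 = f)
    (hφ : ∀ (j : Fin n) (t : ℝ),
      φ (j + 1) t = φ j t + (1 - 1 / (r : ℂ)) * α j *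
        ∫ τ in (0:ℝ)..t, Complex.exp (α j * (t - τ)) * φ j τ) :
    (∀ j : Fin n, Differentiable ℝ (φ (j + 1))) ∧
    (∀ j : Fin n, φ (j + 1) 0 = 0) ∧
    (∀ hn : 0 < n, ∀ t : ℝ,
      deriv (φ 1) t = α ⟨0, hn⟩ * φ 1 t +
        (deriv f t - (α ⟨0, hn⟩ / (r : ℂ)) * f t)) ∧
    (∀ j : Fin n, (j : ℕ) ≠ 0 → ∀ t : ℝ,
      deriv (φ (j + 1)) t - deriv (φ j) t =
        α j * φ (j + 1) t - (α j / (r : ℂ)) * φ j t) := by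
  have hfd : Differentiable ℝ f := hf.differentiable one_ne_zero
  -- key step: derivative of φ (j+1)
  have step : ∀ j : Fin n, Differentiable ℝ (φ (j : ℕ)) → ∀ t : ℝ,
      HasDerivAt (φ ((j : ℕ) + 1))
        (deriv (φ (j : ℕ)) t + α j * (φ ((j : ℕ) + 1) t - φ (j : ℕ) t)
          + (1 - 1 / (r : ℂ)) * α j * φ (j : ℕ) t) t := by
    intro j hd t
    have hG := aux_int_exp_hasDerivAt (α j) (φ (j : ℕ)) hd.continuous t
    have h1 : HasDerivAt (fun s : ℝ => φ (j : ℕ) s + (1 - 1 / (r : ℂ)) * α j *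
          ∫ τ in (0:ℝ)..s, Complex.exp (α j * (s - τ)) * φ (j : ℕ) τ)
        (deriv (φ (j : ℕ)) t + (1 - 1 / (r : ℂ)) * α j *
          (α j * (∫ τ in (0:ℝ)..t, Complex.exp (α j * (t - τ)) * φ (j : ℕ) τ)
            + φ (j : ℕ) t)) t :=
      ((hd t).hasDerivAt).add (hG.const_mul _)
    have hfun : φ ((j : ℕ) + 1) = fun s : ℝ => φ (j : ℕ) s + (1 - 1 / (r : ℂ)) * α j *
        ∫ τ in (0:ℝ)..s, Complex.exp (α j * (s - τ)) * φ (j : ℕ) τ := funext (hφ j)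
    rw [hfun]
    convert h1 using 1
    beta_reduce
    ring
  -- differentiability of each φ m for m ≤ n
  have diff : ∀ m : ℕ, m ≤ n → Differentiable ℝ (φ m) := by
    intro m
    induction m with
    | zero => intro _; rw [hφ0]; exact hfd
    | succ k ih =>
      intro hk
      have hk' : k < n := hk
      exact fun t => ((step ⟨k, hk'⟩ (ih hk'.le) t).differentiableAt)
  -- zero initial values
  have zero : ∀ m : ℕ, m ≤ n → φ m 0 = 0 := by
    intro m
    induction m with
    | zero => intro _; rw [hφ0]; exact hf0
    | succ k ih =>
      intro hk
      have hk' : k < n := hk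
      rw [hφ ⟨k, hk'⟩ 0]
      simp [ih hk'.le]
  refine ⟨?_, ?_, ?_, ?_⟩
  · exact fun j t => (step j (diff _ j.isLt.le) t).differentiableAt
  · exact fun j => zero _ (by omega)
  · intro hn t
    have hd0 : Differentiable ℝ (φ ((⟨0, hn⟩ : Fin n) : ℕ)) := by
      rw [show ((⟨0, hn⟩ : Fin n) : ℕ) = 0 from rfl, hφ0]; exact hfd
    have hd1 : deriv (φ 1) t = deriv (φ 0) t + α ⟨0, hn⟩ * (φ 1 t - φ 0 t)
        + (1 - 1 / (r : ℂ)) * α ⟨0, hn⟩ * φ 0 t := (step ⟨0, hn⟩ hd0 t).deriv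
    rw [hd1, hφ0]
    have hrne : (r : ℂ) ≠ 0 := by
      simp only [ne_eq, Complex.ofReal_eq_zero]; linarith
    field_simp
    ring
  · intro j hj t
    have hd1 := (step j (diff _ j.isLt.le) t).deriv
    rw [hd1]
    have hrne : (r : ℂ) ≠ 0 := by
      simp only [ne_eq, Complex.ofReal_eq_zero]; linarith
    field_simp
    ring
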